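/- For μ > 0, ∫_{ℝ²} e^{ω_μ(z)} ω_μ(z) dz = 8π(log 8 − 2 log μ − 2). -/

import Mathlib

open MeasureTheory Real
set_option maxHeartbeats 1000000

open Set Filter Topology in
lemma key_radial (μ : ℝ) (hμ : 0 < μ) :
    (∫ r in Ioi (0:ℝ), r * (8*μ^2/((μ^2+r^2)^2) * Real.log (8*μ^2/(μ^2+r^2)^2)))
      = 4*(Real.log 8 - 2*Real.log μ - 2) := by
  have hμ2 : (0:ℝ) < μ^2 := by positivity
  have hs : ∀ r : ℝ, 0 < μ^2 + r^2 := fun r => by positivity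
  set L := Real.log (8*μ^2) with hLdef
  have hlogeq : ∀ r : ℝ, Real.log (8*μ^2/(μ^2+r^2)^2) = L - 2*Real.log (μ^2+r^2) := by
    intro r
    rw [Real.log_div (by positivity) (by positivity), Real.log_pow]
    push_cast; ring
  set F : ℝ → ℝ := fun r => 4*μ^2*((2*Real.log (μ^2+r^2) + 2 - L)/(μ^2+r^2)) with hFdef
  have h1 : ∀ r : ℝ, HasDerivAt (fun r : ℝ => μ^2 + r^2) (2*r) r := by
    intro r
    simpa using (hasDerivAt_pow 2 r).const_add (μ^2)
  have hderiv : ∀ r : ℝ, HasDerivAt F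
      (r * (8*μ^2/((μ^2+r^2)^2) * (L - 2*Real.log (μ^2+r^2)))) r := by
    intro r
    have h2 : HasDerivAt (fun r : ℝ => Real.log (μ^2+r^2)) ((μ^2+r^2)⁻¹*(2*r)) r :=
      by have := (Real.hasDerivAt_log (hs r).ne').comp r (h1 r); exact this
    have h3 : HasDerivAt (fun r : ℝ => 2*Real.log (μ^2+r^2) + 2 - L)
        (2*((μ^2+r^2)⁻¹*(2*r))) r := ((h2.const_mul 2).add_const 2).sub_const L
    have h4 := (h3.div (h1 r) (hs r).ne').const_mul (4*μ^2)
    refine h4.congr_deriv ?_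
    field_simp
    ring
  -- integrability of the derivative
  have hint1 : IntegrableOn (fun r : ℝ => r/(μ^2+r^2)^2) (Ioi (0:ℝ)) := by
    have hd : ∀ x ∈ Ici (0:ℝ), HasDerivAt (fun r : ℝ => -(2*(μ^2+r^2))⁻¹)
        (x/(μ^2+x^2)^2) x := by
      intro x _
      have := (((h1 x).const_mul 2).inv (by positivity)).neg
      refine this.congr_deriv ?_
      field_simp
    have htd : Tendsto (fun r : ℝ => -(2*(μ^2+r^2))⁻¹) atTop (𝓝 0) := by
      have hst : Tendsto (fun r : ℝ => 2*(μ^2 + r^2)) atTop atTop :=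
        (tendsto_atTop_add_const_left _ _ (tendsto_pow_atTop two_ne_zero)).const_mul_atTop
          two_pos
      simpa using hst.inv_tendsto_atTop.neg
    exact integrableOn_Ioi_deriv_of_nonneg' hd (fun x hx => by
      have : (0:ℝ) < x := hx
      positivity) htd
  have hint2 : IntegrableOn (fun r : ℝ => r/((μ^2+r^2)*Real.sqrt (μ^2+r^2))) (Ioi (0:ℝ)) := by
    have hd : ∀ x ∈ Ici (0:ℝ), HasDerivAt (fun r : ℝ => -(Real.sqrt (μ^2+r^2))⁻¹)
        (x/((μ^2+x^2)*Real.sqrt (μ^2+x^2))) x := by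
      intro x _
      have hsq : HasDerivAt (fun r : ℝ => Real.sqrt (μ^2+r^2))
          (1/(2*Real.sqrt (μ^2+x^2))*(2*x)) x :=
        (Real.hasDerivAt_sqrt (hs x).ne').comp x (h1 x)
      have hsqpos : 0 < Real.sqrt (μ^2+x^2) := Real.sqrt_pos.mpr (hs x)
      have hder := (hsq.inv hsqpos.ne').neg
      rw [Real.sq_sqrt (hs x).le] at hder
      refine hder.congr_deriv ?_
      have hss : Real.sqrt (μ^2+x^2) * Real.sqrt (μ^2+x^2) = μ^2+x^2 :=
        Real.mul_self_sqrt (hs x).le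
      have hxne := (hs x).ne'
      have hsqne := hsqpos.ne'
      field_simp
    have htd : Tendsto (fun r : ℝ => -(Real.sqrt (μ^2+r^2))⁻¹) atTop (𝓝 0) := by
      have hst : Tendsto (fun r : ℝ => Real.sqrt (μ^2 + r^2)) atTop atTop := by
        apply tendsto_atTop_atTop.2
        intro b
        refine ⟨max b 0, fun a ha => ?_⟩
        have hba : b ≤ a := le_trans (le_max_left _ _) ha
        have h0a : (0:ℝ) ≤ a := le_trans (le_max_right _ _) ha
        calc b ≤ a := hba
          _ = Real.sqrt (a^2) := (Real.sqrt_sq h0a).symm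
          _ ≤ Real.sqrt (μ^2+a^2) := Real.sqrt_le_sqrt (by nlinarith)
      simpa using hst.inv_tendsto_atTop.neg
    exact integrableOn_Ioi_deriv_of_nonneg' hd (fun x hx => by
      have h0 : (0:ℝ) < x := hx
      have : 0 < Real.sqrt (μ^2+x^2) := Real.sqrt_pos.mpr (hs x)
      positivity) htd
  set C := |L| + 4*|Real.log μ| with hCdef
  have hC0 : 0 ≤ C := by positivity
  have hbound : ∀ r ∈ Ioi (0:ℝ),
      |r * (8*μ^2/((μ^2+r^2)^2) * (L - 2*Real.log (μ^2+r^2)))|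
        ≤ 8*μ^2*C*(r/(μ^2+r^2)^2) + 32*μ^2*(r/((μ^2+r^2)*Real.sqrt (μ^2+r^2))) := by
    intro r hr
    have hr0 : (0:ℝ) < r := hr
    have hs0 : 0 < μ^2 + r^2 := hs r
    have hsqpos : 0 < Real.sqrt (μ^2+r^2) := Real.sqrt_pos.mpr hs0
    have hss : Real.sqrt (μ^2+r^2) * Real.sqrt (μ^2+r^2) = μ^2+r^2 :=
      Real.mul_self_sqrt hs0.le
    have hlog : |Real.log (μ^2+r^2)| ≤ 2*|Real.log μ| + 2*Real.sqrt (μ^2+r^2) := by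
      rcases le_total 1 (μ^2+r^2) with h1s | h1s
      · rw [abs_of_nonneg (Real.log_nonneg h1s)]
        have heq : Real.log (μ^2+r^2) = 2 * Real.log (Real.sqrt (μ^2+r^2)) := by
          rw [Real.log_sqrt hs0.le]; ring
        have hle := Real.log_le_sub_one_of_pos hsqpos
        nlinarith [abs_nonneg (Real.log μ)]
      · rw [abs_of_nonpos (Real.log_nonpos hs0.le h1s)]
        have hms : Real.log (μ^2) ≤ Real.log (μ^2+r^2) :=
          Real.log_le_log hμ2 (by nlinarith [sq_nonneg r])
        have hlm : Real.log (μ^2) = 2*Real.log μ := by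
          rw [sq, Real.log_mul hμ.ne' hμ.ne']; ring
        nlinarith [neg_abs_le (Real.log μ), Real.sqrt_nonneg (μ^2+r^2)]
    have habs : |L - 2*Real.log (μ^2+r^2)| ≤ C + 4*Real.sqrt (μ^2+r^2) := by
      have h := abs_sub L (2*Real.log (μ^2+r^2))
      rw [abs_mul] at h
      simp only [abs_two] at h
      nlinarith
    have heq : |r * (8*μ^2/((μ^2+r^2)^2) * (L - 2*Real.log (μ^2+r^2)))|
        = r * (8*μ^2/((μ^2+r^2)^2)) * |L - 2*Real.log (μ^2+r^2)| := by
      rw [abs_mul, abs_mul, abs_of_nonneg hr0.le, abs_of_nonneg (by positivity : (0:ℝ) ≤ 8*μ^2/((μ^2+r^2)^2))]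
      ring
    rw [heq]
    calc r * (8*μ^2/((μ^2+r^2)^2)) * |L - 2*Real.log (μ^2+r^2)|
        ≤ r * (8*μ^2/((μ^2+r^2)^2)) * (C + 4*Real.sqrt (μ^2+r^2)) := by
          apply mul_le_mul_of_nonneg_left habs (by positivity)
      _ = 8*μ^2*C*(r/(μ^2+r^2)^2) + 32*μ^2*(r/((μ^2+r^2)*Real.sqrt (μ^2+r^2))) := by
          have h2 : r*Real.sqrt (μ^2+r^2)/((μ^2+r^2)^2) = r/((μ^2+r^2)*Real.sqrt (μ^2+r^2)) := by
            rw [div_eq_div_iff (by positivity) (by positivity)]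
            linear_combination r*(μ^2+r^2)*hss
          rw [← h2]
          ring
  have hcont : Continuous (fun r : ℝ => r * (8*μ^2/((μ^2+r^2)^2) * (L - 2*Real.log (μ^2+r^2)))) := by
    have hlogc : Continuous fun r : ℝ => Real.log (μ^2+r^2) :=
      (continuous_const.add (continuous_pow 2)).log fun r => (hs r).ne'
    exact continuous_id.mul ((continuous_const.div
      ((continuous_const.add (continuous_pow 2)).pow 2) (fun r => (pow_pos (hs r) 2).ne')).mul
      (continuous_const.sub (continuous_const.mul hlogc)))
  have hint : IntegrableOn (fun r : ℝ => r * (8*μ^2/((μ^2+r^2)^2) * (L - 2*Real.log (μ^2+r^2))))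
      (Ioi (0:ℝ)) := by
    have hb : IntegrableOn (fun r : ℝ => 8*μ^2*C*(r/(μ^2+r^2)^2)
        + 32*μ^2*(r/((μ^2+r^2)*Real.sqrt (μ^2+r^2)))) (Ioi (0:ℝ)) :=
      (hint1.const_mul _).add (hint2.const_mul _)
    refine MeasureTheory.Integrable.mono hb hcont.aestronglyMeasurable.restrict ?_
    refine (ae_restrict_iff' measurableSet_Ioi).mpr (ae_of_all _ fun r hr => ?_)
    have hr0 : (0:ℝ) < r := hr
    have hsqpos : 0 < Real.sqrt (μ^2+r^2) := Real.sqrt_pos.mpr (hs r)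
    refine (hbound r hr).trans (le_abs_self _)
  -- limit of F at infinity
  have hFtop : Tendsto F atTop (𝓝 0) := by
    have hs_top : Tendsto (fun r : ℝ => μ^2 + r^2) atTop atTop :=
      tendsto_atTop_add_const_left _ _ (tendsto_pow_atTop two_ne_zero)
    have ht1 : Tendsto (fun r : ℝ => Real.log (μ^2+r^2)/(μ^2+r^2)) atTop (𝓝 0) :=
      (Real.isLittleO_log_id_atTop.tendsto_div_nhds_zero).comp hs_top
    have ht2 : Tendsto (fun r : ℝ => (μ^2+r^2)⁻¹) atTop (𝓝 0) := hs_top.inv_tendsto_atTop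
    have hcomb : Tendsto (fun r : ℝ =>
        4*μ^2*(2*(Real.log (μ^2+r^2)/(μ^2+r^2)) + (2-L)*(μ^2+r^2)⁻¹)) atTop
        (𝓝 (4*μ^2*(2*0 + (2-L)*0))) :=
      ((ht1.const_mul 2).add (ht2.const_mul (2-L))).const_mul _
    simp only [mul_zero, add_zero, zero_add] at hcomb
    refine hcomb.congr fun r => ?_
    simp only [hFdef]
    have := (hs r).ne'
    field_simp
    ring
  have hftc := integral_Ioi_of_hasDerivAt_of_tendsto' (fun x _ => hderiv x) hint hFtop
  have hF0 : F 0 = 4*(2*Real.log μ + 2 - Real.log 8) := by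
    have hL8 : L = Real.log 8 + 2*Real.log μ := by
      rw [hLdef, Real.log_mul (by norm_num) hμ2.ne', Real.log_pow]
      push_cast; ring
    have hlm : Real.log (μ^2) = 2*Real.log μ := by
      rw [sq, Real.log_mul hμ.ne' hμ.ne']; ring
    simp only [hFdef]
    have h0 : (0:ℝ)^2 = 0 := by norm_num
    rw [h0, add_zero, hlm, hL8]
    field_simp
    ring
  calc (∫ r in Ioi (0:ℝ), r * (8*μ^2/((μ^2+r^2)^2) * Real.log (8*μ^2/(μ^2+r^2)^2)))
      = ∫ r in Ioi (0:ℝ), r * (8*μ^2/((μ^2+r^2)^2) * (L - 2*Real.log (μ^2+r^2))) := by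
        simp_rw [hlogeq]
    _ = 0 - F 0 := hftc
    _ = 4*(Real.log 8 - 2*Real.log μ - 2) := by rw [hF0]; ring

open Set in
/-- `ω_μ(z) = log(8μ²/(μ² + |z|²)²)`. -/
noncomputable def omega (μ : ℝ) (z : ℝ × ℝ) : ℝ :=
  Real.log (8 * μ ^ 2 / (μ ^ 2 + (z.1 ^ 2 + z.2 ^ 2)) ^ 2)

theorem stmt4 (μ : ℝ) (hμ : 0 < μ) :
    (∫ z : ℝ × ℝ, Real.exp (omega μ z) * omega μ z)
      = 8 * π * (Real.log 8 - 2 * Real.log μ - 2) := by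
  have key := key_radial μ hμ
  have hpt : ∀ z : ℝ × ℝ, Real.exp (omega μ z) * omega μ z
      = 8*μ^2/((μ^2+(z.1^2+z.2^2))^2) * Real.log (8*μ^2/(μ^2+(z.1^2+z.2^2))^2) := by
    intro z
    have hpos : 0 < 8*μ^2/(μ^2+(z.1^2+z.2^2))^2 := by positivity
    rw [omega, Real.exp_log hpos]
  calc (∫ z : ℝ × ℝ, Real.exp (omega μ z) * omega μ z)
      = ∫ z : ℝ × ℝ, 8*μ^2/((μ^2+(z.1^2+z.2^2))^2)
          * Real.log (8*μ^2/(μ^2+(z.1^2+z.2^2))^2) := by simp_rw [hpt]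
    _ = ∫ p in polarCoord.target, p.1 • (8*μ^2/((μ^2+((p.1*Real.cos p.2)^2+(p.1*Real.sin p.2)^2))^2)
          * Real.log (8*μ^2/(μ^2+((p.1*Real.cos p.2)^2+(p.1*Real.sin p.2)^2))^2)) := by
        rw [← integral_comp_polarCoord_symm]
        simp only [polarCoord_symm_apply]
    _ = (∫ r in Set.Ioi (0:ℝ), r * (8*μ^2/((μ^2+r^2)^2) * Real.log (8*μ^2/(μ^2+r^2)^2)))
          * ∫ θ in Set.Ioo (-π) π, (1:ℝ) := by
        rw [polarCoord_target, ← setIntegral_prod_mul]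
        congr with p : 1
        have hcs : (p.1*Real.cos p.2)^2+(p.1*Real.sin p.2)^2 = p.1^2 := by
          have h := Real.sin_sq_add_cos_sq p.2
          linear_combination p.1^2 * h
        rw [hcs, smul_eq_mul, mul_one]
    _ = 8 * π * (Real.log 8 - 2 * Real.log μ - 2) := by
        have h2π : (0:ℝ) ≤ π + π := by positivity
        rw [key]
        simp only [integral_const, Measure.restrict_apply', measurableSet_Ioo, Set.univ_inter,
          measureReal_restrict_apply_univ, Real.volume_real_Ioo, sub_neg_eq_add, max_eq_left h2π, ENNReal.toReal_ofReal h2π, smul_eq_mul, mul_one]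
        ring
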